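/- If (P_n) is a sequence of orthogonal projections on a Hilbert space converging strongly to the identity, and the sequence (P_n A P_n) is stable (i.e. there exist m > 0 and n₀ such that for n ≥ n₀ the operators P_n A P_n : im P_n → im P_n are invertible with ‖(P_n A P_n)^{−1} P_n‖ ≤ m), then the operator A is injective and has closed range with a bounded left inverse; if additionally P_n A* P_n is stable, then A is invertible. -/

import Mathlib

open MeasureTheory Filter Topology ContinuousLinearMap

/-- Stability of the sequence of compressions `(Pₙ A Pₙ)`. -/
def GalerkinStable {H : Type*} [NormedAddCommGroup H] [InnerProductSpace ℂ H]
    (P : ℕ → H →L[ℂ] H) (A : H →L[ℂ] H) : Prop :=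
  ∃ m : ℝ, 0 < m ∧ ∃ n₀ : ℕ, ∀ n ≥ n₀, ∃ B : H →L[ℂ] H,
    (∀ x, B (P n (A (P n x))) = P n x) ∧
    (∀ x, P n (A (P n (B (P n x)))) = P n x) ∧
    ‖B ∘L P n‖ ≤ m

lemma galerkin_bound {H : Type*} [NormedAddCommGroup H] [InnerProductSpace ℂ H]
    [CompleteSpace H] (P : ℕ → H →L[ℂ] H)
    (hconv : ∀ x : H, Tendsto (fun n => P n x) atTop (𝓝 x))
    (A : H →L[ℂ] H) (hstab : GalerkinStable P A) :
    ∃ c : ℝ, 0 < c ∧ ∀ x : H, ‖x‖ ≤ c * ‖A x‖ := by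
  obtain ⟨m, hm, n₀, hB⟩ := hstab
  refine ⟨m, hm, fun x => ?_⟩
  have key : ∀ n ≥ n₀, ‖P n x‖ ≤ m * ‖A (P n x)‖ := by
    intro n hn
    obtain ⟨B, h1, h2, h3⟩ := hB n hn
    calc ‖P n x‖ = ‖(B ∘L P n) (A (P n x))‖ := by
          simp only [ContinuousLinearMap.comp_apply]
          rw [h1]
      _ ≤ ‖B ∘L P n‖ * ‖A (P n x)‖ := (B ∘L P n).le_opNorm _
      _ ≤ m * ‖A (P n x)‖ := by
          apply mul_le_mul_of_nonneg_right h3 (norm_nonneg _)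
  have t1 : Tendsto (fun n => ‖P n x‖) atTop (𝓝 ‖x‖) := (hconv x).norm
  have t2 : Tendsto (fun n => m * ‖A (P n x)‖) atTop (𝓝 (m * ‖A x‖)) :=
    (((A.continuous.tendsto x).comp (hconv x)).norm).const_mul m
  exact le_of_tendsto_of_tendsto t1 t2 (Filter.eventually_atTop.2 ⟨n₀, key⟩)

theorem stability_implies_invertibility
    {H : Type*} [NormedAddCommGroup H] [InnerProductSpace ℂ H] [CompleteSpace H]
    (P : ℕ → H →L[ℂ] H)
    (hproj : ∀ n, (P n) ∘L (P n) = P n ∧ adjoint (P n) = P n)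
    (hconv : ∀ x : H, Tendsto (fun n => P n x) atTop (𝓝 x))
    (A : H →L[ℂ] H) (hstab : GalerkinStable P A) :
    (∃ c : ℝ, 0 < c ∧ ∀ x : H, ‖x‖ ≤ c * ‖A x‖) ∧
    (GalerkinStable P (adjoint A) →
      ∃ A' : H →L[ℂ] H, A' ∘L A = 1 ∧ A ∘L A' = 1) := by
  obtain ⟨c, hc, hbd⟩ := galerkin_bound P hconv A hstab
  refine ⟨⟨c, hc, hbd⟩, fun hstab' => ?_⟩
  obtain ⟨c', hc', hbd'⟩ := galerkin_bound P hconv (adjoint A) hstab'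
  -- ker A = ⊥
  have hker : LinearMap.ker (A : H →ₗ[ℂ] H) = ⊥ := by
    rw [LinearMap.ker_eq_bot']
    intro x hx
    have := hbd x
    rw [show A x = 0 from hx] at this
    simpa using norm_le_zero_iff.1 (by simpa using this)
  -- A is antilipschitz, hence closed range
  have hanti : AntilipschitzWith ⟨c, hc.le⟩ A :=
    ContinuousLinearMap.antilipschitz_of_bound A hbd
  have hclosed : IsClosed (Set.range A) :=
    hanti.isClosed_range A.uniformContinuous
  -- range A = ⊤
  have hrange : LinearMap.range (A : H →ₗ[ℂ] H) = ⊤ := by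
    have hcl : IsClosed (LinearMap.range (A : H →ₗ[ℂ] H) : Set H) := by
      simpa [LinearMap.coe_range] using hclosed
    have : CompleteSpace (LinearMap.range (A : H →ₗ[ℂ] H)) := hcl.completeSpace_coe
    rw [← Submodule.orthogonal_eq_bot_iff]
    rw [Submodule.eq_bot_iff]
    intro y hy
    have hAy : adjoint A y = 0 := by
      apply ext_inner_left ℂ
      intro v
      rw [ContinuousLinearMap.adjoint_inner_right, inner_zero_right]
      exact (Submodule.mem_orthogonal _ y).1 hy (A v) (LinearMap.mem_range_self _ v)
    have := hbd' y
    rw [hAy] at this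
    simpa using norm_le_zero_iff.1 (by simpa using this)
  refine ⟨(ContinuousLinearEquiv.ofBijective A hker hrange).symm.toContinuousLinearMap, ?_, ?_⟩
  · ext x
    exact (ContinuousLinearEquiv.ofBijective A hker hrange).symm_apply_apply x
  · ext x
    exact (ContinuousLinearEquiv.ofBijective A hker hrange).apply_symm_apply x
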